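/- arXiv:2004.13884 — 2 statements merged into one kernel-verified Lean document; each statement's English description precedes it below -/
import Mathlib

section
/- Let C ⊆ ℝⁿ be the convex polyhedron determined by vectors x*_1,…,x*_s ∈ ℝⁿ and scalars c_1,…,c_s, let x ∈ C, and let v ∈ N(x;C) (convex normal cone). Assume that the vectors {x*_j : j ∈ I(x)} are linearly independent. Then the domain of the coderivative D*N_C(x,v), i.e. the set {w ∈ ℝⁿ : D*N_C(x,v)(w) ≠ ∅}, equals {w ∈ ℝⁿ : there exist λ_j ≥ 0 for j ∈ I(x) with v = Σ_{j∈I(x)} λ_j x*_j and ⟨x*_j, w⟩ = 0 for every j ∈ I(x) with λ_j > 0}. -/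
open Filter Topology Set MeasureTheory
open scoped RealInnerProductSpace

noncomputable section

/-- The limiting (Mordukhovich) normal cone to a set `Ω` at `z`. -/
def limNormal {E : Type*} [NormedAddCommGroup E] [NormedSpace ℝ E]
    (Ω : Set E) (z : E) : Set E :=
  {v | ∃ (zk vk : ℕ → E) (tk : ℕ → ℝ) (yk : ℕ → E),
      Tendsto zk atTop (𝓝 z) ∧ Tendsto vk atTop (𝓝 v) ∧
      (∀ k, 0 ≤ tk k) ∧ (∀ k, yk k ∈ Ω) ∧
      (∀ k, ‖zk k - yk k‖ = Metric.infDist (zk k) Ω) ∧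
      (∀ k, vk k = tk k • (zk k - yk k))}

/-- The convex normal cone to a convex set `C` at `x` (empty if `x ∉ C`). -/
def convNormal {E : Type*} [NormedAddCommGroup E] [InnerProductSpace ℝ E]
    (C : Set E) (x : E) : Set E :=
  {v | x ∈ C ∧ ∀ y ∈ C, ⟪v, y - x⟫ ≤ 0}

/-- Pairing of two components into the `L²` product. -/
def pmk {E F : Type*} [NormedAddCommGroup E] [NormedAddCommGroup F]
    (a : E) (b : F) : WithLp 2 (E × F) :=
  (WithLp.equiv 2 (E × F)).symm (a, b)

/-- First component of an `L²` product element. -/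
def pfst {E F : Type*} [NormedAddCommGroup E] [NormedAddCommGroup F]
    (q : WithLp 2 (E × F)) : E := ((WithLp.equiv 2 (E × F)) q).1

/-- Second component of an `L²` product element. -/
def psnd {E F : Type*} [NormedAddCommGroup E] [NormedAddCommGroup F]
    (q : WithLp 2 (E × F)) : F := ((WithLp.equiv 2 (E × F)) q).2

/-- The coderivative of a set-valued map `G` at `(z, y) ∈ gph G`, applied to `w`. -/
def coderiv {E F : Type*} [NormedAddCommGroup E] [NormedSpace ℝ E]
    [NormedAddCommGroup F] [NormedSpace ℝ F]
    (G : E → Set F) (z : E) (y : F) (w : F) : Set E :=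
  {v | pmk v (-w) ∈ limNormal {q : WithLp 2 (E × F) | psnd q ∈ G (pfst q)} (pmk z y)}

/-- The limiting subdifferential of `h : E → ℝ` at `z`, via limiting normals to the epigraph. -/
def limSubdiff {E : Type*} [NormedAddCommGroup E] [NormedSpace ℝ E]
    (h : E → ℝ) (z : E) : Set E :=
  {v | pmk v (-1 : ℝ) ∈ limNormal {q : WithLp 2 (E × ℝ) | h (pfst q) ≤ psnd q} (pmk z (h z))}
/-- `Euc n` is the Euclidean space `ℝⁿ`. -/
abbrev Euc (n : ℕ) := EuclideanSpace ℝ (Fin n)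



section ProdHelpers

variable {E F : Type*} [NormedAddCommGroup E] [NormedAddCommGroup F]

lemma pfst_pmk (a : E) (b : F) : pfst (pmk a b) = a := rfl

lemma psnd_pmk (a : E) (b : F) : psnd (pmk a b) = b := rfl

lemma pmk_sub (a a' : E) (b b' : F) : pmk a b - pmk a' b' = pmk (a - a') (b - b') := rfl

lemma pmk_eta (q : WithLp 2 (E × F)) : pmk (pfst q) (psnd q) = q := rfl

lemma pnorm_sq (a : E) (b : F) : ‖pmk a b‖ ^ 2 = ‖a‖ ^ 2 + ‖b‖ ^ 2 :=
  WithLp.prod_norm_sq_eq_of_L2 _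

variable [InnerProductSpace ℝ E] [InnerProductSpace ℝ F]

lemma smul_pmk (t : ℝ) (a : E) (b : F) : t • pmk a b = pmk (t • a) (t • b) := rfl

lemma psnd_smul (t : ℝ) (q : WithLp 2 (E × F)) : psnd (t • q) = t • psnd q := rfl

lemma pinner (a : E) (b : F) (a' : E) (b' : F) :
    ⟪pmk a b, pmk a' b'⟫ = ⟪a, a'⟫ + ⟪b, b'⟫ :=
  WithLp.prod_inner_apply _ _

lemma tendsto_pmk {α : Type*} {l : Filter α} {f : α → E} {g : α → F} {a : E} {b : F}
    (hf : Tendsto f l (𝓝 a)) (hg : Tendsto g l (𝓝 b)) :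
    Tendsto (fun k => pmk (f k) (g k)) l (𝓝 (pmk a b)) :=
  ((WithLp.prodContinuousLinearEquiv 2 ℝ E F).symm.continuous.tendsto (a, b)).comp
    (hf.prodMk_nhds hg)

lemma tendsto_pfst {α : Type*} {l : Filter α} {q : α → WithLp 2 (E × F)} {Q : WithLp 2 (E × F)}
    (h : Tendsto q l (𝓝 Q)) : Tendsto (fun k => pfst (q k)) l (𝓝 (pfst Q)) :=
  ((continuous_fst.comp (WithLp.prodContinuousLinearEquiv 2 ℝ E F).continuous).tendsto Q).comp h

lemma tendsto_psnd {α : Type*} {l : Filter α} {q : α → WithLp 2 (E × F)} {Q : WithLp 2 (E × F)}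
    (h : Tendsto q l (𝓝 Q)) : Tendsto (fun k => psnd (q k)) l (𝓝 (psnd Q)) :=
  ((continuous_snd.comp (WithLp.prodContinuousLinearEquiv 2 ℝ E F).continuous).tendsto Q).comp h

end ProdHelpers


/-- small numeric helper -/
lemma tau_le {a b : ℝ} (hb : 0 ≤ b) (h : ∀ τ : ℝ, 0 < τ → τ < 1 → a * τ ≤ b * τ ^ 2) :
    a ≤ 0 := by
  by_contra hpos
  push_neg at hpos
  set τ := min (1/2 : ℝ) (a / (2 * b + 1)) with hτdef
  have hτpos : 0 < τ := lt_min (by norm_num) (by positivity)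
  have hτlt : τ < 1 := lt_of_le_of_lt (min_le_left _ _) (by norm_num)
  have h2 := h τ hτpos hτlt
  have h3 : τ ≤ a / (2 * b + 1) := min_le_right _ _
  have h4 : b * τ ≤ a / 2 := by
    have : b * τ ≤ b * (a / (2 * b + 1)) := mul_le_mul_of_nonneg_left h3 hb
    have h5 : b * (a / (2 * b + 1)) ≤ a / 2 := by
      rw [mul_div_assoc', div_le_div_iff₀ (by positivity) (by norm_num)]
      nlinarith [hpos, hb]
    linarith
  nlinarith [mul_le_mul_of_nonneg_right h4 hτpos.le, sq_nonneg τ]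

/-- existence of a positive step `τ` keeping `a + τ • d` inside the polyhedron -/
lemma exists_step {n s : ℕ} (xs : Fin s → Euc n) (c : Fin s → ℝ) (a d : Euc n)
    (ha : ∀ j, ⟪xs j, a⟫ ≤ c j)
    (h : ∀ j, ⟪xs j, a⟫ < c j ∨ ⟪xs j, d⟫ ≤ 0) :
    ∃ τ : ℝ, 0 < τ ∧ ∀ j, ⟪xs j, a + τ • d⟫ ≤ c j := by
  have hev : ∀ j, ∀ᶠ τ : ℝ in 𝓝[>] (0:ℝ), ⟪xs j, a + τ • d⟫ ≤ c j := by
    intro j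
    have hfe : (fun τ : ℝ => ⟪xs j, a + τ • d⟫) = fun τ : ℝ => ⟪xs j, a⟫ + τ * ⟪xs j, d⟫ := by
      funext τ; rw [inner_add_right, real_inner_smul_right]
    rcases h j with hlt | hle
    · have htend : Tendsto (fun τ : ℝ => ⟪xs j, a + τ • d⟫) (𝓝[>] (0:ℝ)) (𝓝 ⟪xs j, a⟫) := by
        rw [hfe]
        have : Tendsto (fun τ : ℝ => ⟪xs j, a⟫ + τ * ⟪xs j, d⟫) (𝓝 (0:ℝ))
            (𝓝 (⟪xs j, a⟫ + 0 * ⟪xs j, d⟫)) := by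
          exact (tendsto_const_nhds.add ((tendsto_id).mul tendsto_const_nhds))
        simpa using this.mono_left nhdsWithin_le_nhds
      exact (htend.eventually_lt_const hlt).mono fun τ hτ => hτ.le
    · filter_upwards [self_mem_nhdsWithin] with τ hτ
      rw [inner_add_right, real_inner_smul_right]
      have hτ' : (0:ℝ) < τ := hτ
      nlinarith [ha j]
  have hall : ∀ᶠ τ : ℝ in 𝓝[>] (0:ℝ), ∀ j, ⟪xs j, a + τ • d⟫ ≤ c j := eventually_all.2 hev
  obtain ⟨τ, hτ1, hτ2⟩ := (hall.and self_mem_nhdsWithin).exists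
  exact ⟨τ, hτ2, hτ1⟩

/-- dual vectors for a linearly independent active family -/
lemma exists_dual {n s : ℕ} (xs : Fin s → Euc n) (act : Fin s → Prop)
    (hLI : LinearIndependent ℝ (fun j : {j : Fin s // act j} => xs j)) :
    ∃ W : Fin s → Euc n, ∀ i j, act i → act j → ⟪xs i, W j⟫ = if i = j then 1 else 0 := by
  have key : ∀ j : Fin s, ∃ wj : Euc n,
      act j → ∀ i, act i → ⟪xs i, wj⟫ = if i = j then 1 else 0 := by
    intro j
    by_cases hj : act j
    · set ι := {j : Fin s // act j}
      set v : ι → Euc n := fun i => xs i with hv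
      set j0 : ι := ⟨j, hj⟩ with hj0
      set S : Submodule ℝ (Euc n) := Submodule.span ℝ (v '' {i | i ≠ j0}) with hS
      have hnot : v j0 ∉ S := hLI.notMem_span_image (fun h => h rfl)
      set q : Euc n := v j0 - (Submodule.orthogonalProjectionOnto S (v j0) : Euc n) with hqdef
      have hqS : q ∈ Sᗮ := Submodule.sub_starProjection_mem_orthogonal _
      have hq0 : q ≠ 0 := by
        intro h
        apply hnot
        have : v j0 = (Submodule.orthogonalProjectionOnto S (v j0) : Euc n) := by
          rwa [sub_eq_zero] at h
        rw [this]
        exact (Submodule.orthogonalProjectionOnto S (v j0)).2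
      have horthog : ∀ i : Fin s, act i → i ≠ j → ⟪xs i, q⟫ = 0 := by
        intro i hi hij
        refine (Submodule.mem_orthogonal S q).1 hqS (xs i) ?_
        exact Submodule.subset_span ⟨⟨i, hi⟩, by simpa [hj0] using fun h => hij (congrArg Subtype.val h), rfl⟩
      have hself : ⟪xs j, q⟫ = ‖q‖ ^ 2 := by
        have hxq : xs j = q + (Submodule.orthogonalProjectionOnto S (v j0) : Euc n) := by
          simp [hqdef, hv, hj0]
        rw [hxq, inner_add_left, real_inner_self_eq_norm_sq]
        have : ⟪(Submodule.orthogonalProjectionOnto S (v j0) : Euc n), q⟫ = 0 :=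
          (Submodule.mem_orthogonal S q).1 hqS _ (Submodule.orthogonalProjectionOnto S (v j0)).2
        linarith [this]
      refine ⟨(‖q‖ ^ 2)⁻¹ • q, fun _ i hi => ?_⟩
      rw [real_inner_smul_right]
      by_cases hij : i = j
      · subst hij
        rw [hself, if_pos rfl]
        exact inv_mul_cancel₀ (pow_ne_zero 2 (norm_ne_zero_iff.2 hq0))
      · rw [horthog i hi hij, if_neg hij]
        ring
    · exact ⟨0, fun h => absurd h hj⟩
  choose W hW using key
  exact ⟨W, fun i j hi hj => hW j hj i hi⟩

/-- Farkas-type representation of normal vectors at a point whose active set is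
contained in the active set at `x`, where the active family at `x` has dual vectors `W`. -/
lemma farkas {n s : ℕ} (xs : Fin s → Euc n) (c : Fin s → ℝ) (x : Euc n) (W : Fin s → Euc n)
    (hW : ∀ i j, ⟪xs i, x⟫ = c i → ⟪xs j, x⟫ = c j → ⟪xs i, W j⟫ = if i = j then 1 else 0)
    (a : Euc n) (ha : ∀ j, ⟪xs j, a⟫ ≤ c j)
    (hsub : ∀ j, ⟪xs j, a⟫ = c j → ⟪xs j, x⟫ = c j)
    (p : Euc n) (hp : ∀ y : Euc n, (∀ j, ⟪xs j, y⟫ ≤ c j) → ⟪p, y - a⟫ ≤ 0) :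
    ∃ μ : Fin s → ℝ, (∀ j, 0 ≤ μ j) ∧ (∀ j, ⟪xs j, a⟫ ≠ c j → μ j = 0) ∧
      p = ∑ j, μ j • xs j ∧ (∀ j, ⟪xs j, x⟫ = c j → μ j = ⟪W j, p⟫) := by
  classical
  set Sa : Submodule ℝ (Euc n) := Submodule.span ℝ (xs '' {j | ⟪xs j, a⟫ = c j}) with hSa
  set p' : Euc n := p - (Submodule.orthogonalProjectionOnto Sa p : Euc n) with hp'def
  have hp'S : p' ∈ Saᗮ := Submodule.sub_starProjection_mem_orthogonal _
  have hp'inner : ∀ j, ⟪xs j, a⟫ = c j → ⟪xs j, p'⟫ = 0 := by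
    intro j hj
    exact (Submodule.mem_orthogonal Sa p').1 hp'S (xs j)
      (Submodule.subset_span ⟨j, hj, rfl⟩)
  -- show p' = 0
  have hp'0 : p' = 0 := by
    obtain ⟨τ, hτ, hfeas⟩ := exists_step xs c a p' ha (by
      intro j
      by_cases hj : ⟪xs j, a⟫ = c j
      · exact Or.inr (le_of_eq (hp'inner j hj))
      · exact Or.inl (lt_of_le_of_ne (ha j) hj))
    have h1 := hp _ hfeas
    rw [add_sub_cancel_left, real_inner_smul_right] at h1
    have hpp' : ⟪p, p'⟫ = ‖p'‖ ^ 2 := by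
      have hdecomp : p = p' + (Submodule.orthogonalProjectionOnto Sa p : Euc n) := by
        simp [hp'def]
      rw [hdecomp, inner_add_left, real_inner_self_eq_norm_sq]
      have h0 : ⟪(Submodule.orthogonalProjectionOnto Sa p : Euc n), p'⟫ = 0 :=
        (Submodule.mem_orthogonal Sa p').1 hp'S _ (Submodule.orthogonalProjectionOnto Sa p).2
      linarith
    rw [hpp'] at h1
    have : ‖p'‖ ^ 2 ≤ 0 := nonpos_of_mul_nonpos_right (by linarith [mul_comm τ (‖p'‖^2)]) hτ
    have := le_antisymm this (sq_nonneg _)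
    simpa [pow_eq_zero_iff] using this
  have hpSa : p ∈ Sa := by
    have : p = (Submodule.orthogonalProjectionOnto Sa p : Euc n) := by
      have := sub_eq_zero.1 hp'0
      simpa [hp'def] using this
    rw [this]; exact (Submodule.orthogonalProjectionOnto Sa p).2
  rw [hSa, Finsupp.mem_span_image_iff_linearCombination] at hpSa
  obtain ⟨l, hlsupp, hl⟩ := hpSa
  have hlsupp' : ∀ j, ⟪xs j, a⟫ ≠ c j → l j = 0 := by
    intro j hj
    exact (Finsupp.mem_supported' ℝ l).1 hlsupp j hj
  have hsum : p = ∑ j, l j • xs j := by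
    rw [← hl, Finsupp.linearCombination_apply, Finsupp.sum_fintype]
    intro i; simp
  have hcoef : ∀ j, ⟪xs j, x⟫ = c j → ⟪W j, p⟫ = l j := by
    intro j hj
    rw [hsum, inner_sum]
    have : ∀ i ∈ Finset.univ, ⟪W j, l i • xs i⟫ = if i = j then l i else 0 := by
      intro i _
      rw [real_inner_smul_right]
      by_cases hli : l i = 0
      · simp [hli]
      · have hacta : ⟪xs i, a⟫ = c i := by
          by_contra hc; exact hli (hlsupp' i hc)
        have hacti : ⟪xs i, x⟫ = c i := hsub i hacta
        rw [real_inner_comm, hW i j hacti hj]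
        by_cases hij : i = j <;> simp [hij]
    rw [Finset.sum_congr rfl this]
    simp
  have hnn : ∀ j, 0 ≤ l j := by
    intro j
    by_cases hj : ⟪xs j, a⟫ = c j
    · by_contra hneg
      push_neg at hneg
      obtain ⟨τ, hτ, hfeas⟩ := exists_step xs c a (-W j) ha (by
        intro i
        by_cases hi : ⟪xs i, a⟫ = c i
        · refine Or.inr ?_
          rw [inner_neg_right, hW i j (hsub i hi) (hsub j hj)]
          by_cases hij : i = j <;> simp [hij]
        · exact Or.inl (lt_of_le_of_ne (ha i) hi))
      have h1 := hp _ hfeas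
      rw [add_sub_cancel_left, real_inner_smul_right, inner_neg_right] at h1
      have h2 : 0 ≤ ⟪p, W j⟫ := by nlinarith
      have h3 : l j = ⟪W j, p⟫ := (hcoef j (hsub j hj)).symm
      rw [real_inner_comm] at h3
      linarith
    · rw [hlsupp' j hj]
  exact ⟨fun j => l j, hnn, hlsupp', hsum, fun j hj => (hcoef j hj).symm⟩

set_option maxHeartbeats 2000000 in
/-- computation of the domain of the coderivative of the normal cone
mapping `x ↦ N(x;C)` for a convex polyhedron under LICQ. -/
theorem statement1 (n s : ℕ)
    (xs : Fin s → Euc n) (c : Fin s → ℝ)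
    (C : Set (Euc n)) (hC : C = {x | ∀ j, ⟪xs j, x⟫ ≤ c j})
    (x : Euc n) (hx : x ∈ C)
    (v : Euc n) (hv : v ∈ convNormal C x)
    (hLI : LinearIndependent ℝ (fun j : {j : Fin s // ⟪xs j, x⟫ = c j} => xs j)) :
    {w : Euc n | (coderiv (fun y => convNormal C y) x v w).Nonempty} =
      {w : Euc n | ∃ lam : Fin s → ℝ, (∀ j, 0 ≤ lam j) ∧
        (∀ j, ⟪xs j, x⟫ ≠ c j → lam j = 0) ∧
        v = ∑ j, lam j • xs j ∧
        (∀ j, 0 < lam j → ⟪xs j, w⟫ = 0)} := by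
  classical
  have hmem : ∀ y : Euc n, y ∈ C ↔ ∀ j, ⟪xs j, y⟫ ≤ c j := fun y => by rw [hC]; exact Iff.rfl
  obtain ⟨W, hW⟩ := exists_dual xs (fun j => ⟪xs j, x⟫ = c j) hLI
  have hxC' : ∀ j, ⟪xs j, x⟫ ≤ c j := (hmem x).1 hx
  obtain ⟨hxC, hvN⟩ := hv
  obtain ⟨lam, hlam0, hlamsupp, hlamsum, hlameq⟩ :=
    farkas xs c x W hW x hxC' (fun _ h => h) v (fun y hy => hvN y ((hmem y).2 hy))
  set Ω : Set (WithLp 2 (Euc n × Euc n)) :=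
    {q | psnd q ∈ convNormal C (pfst q)} with hΩdef
  have hxvΩ : pmk x v ∈ Ω := ⟨hxC, hvN⟩
  ext w
  simp only [Set.mem_setOf_eq]
  constructor
  · rintro ⟨u, hu⟩
    have hu' : pmk u (-w) ∈ limNormal Ω (pmk x v) := hu
    obtain ⟨zk, vk, tk, yk, hz, hvk, htk, hyΩ, hproj, hvdef⟩ := hu'
    set ak : ℕ → Euc n := fun k => pfst (yk k) with hakdef
    set pk : ℕ → Euc n := fun k => psnd (yk k) with hpkdef
    have hyCN : ∀ k, ak k ∈ C ∧ ∀ y ∈ C, ⟪pk k, y - ak k⟫ ≤ 0 := fun k => hyΩ k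
    -- yk tends to (x, v)
    have hyk : Tendsto yk atTop (𝓝 (pmk x v)) := by
      rw [tendsto_iff_dist_tendsto_zero] at hz ⊢
      have hb : ∀ k, dist (yk k) (pmk x v) ≤ 2 * dist (zk k) (pmk x v) := by
        intro k
        have h1 : dist (yk k) (zk k) = Metric.infDist (zk k) Ω := by
          rw [dist_comm, dist_eq_norm]; exact hproj k
        have h2 : Metric.infDist (zk k) Ω ≤ dist (zk k) (pmk x v) :=
          Metric.infDist_le_dist_of_mem hxvΩ
        calc dist (yk k) (pmk x v) ≤ dist (yk k) (zk k) + dist (zk k) (pmk x v) :=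
              dist_triangle _ _ _
          _ ≤ 2 * dist (zk k) (pmk x v) := by rw [h1]; linarith
      have := hz.const_mul (2:ℝ)
      simp only [mul_zero] at this
      exact squeeze_zero (fun k => dist_nonneg) hb this
    have hak : Tendsto ak atTop (𝓝 x) := tendsto_pfst hyk
    have hpk : Tendsto pk atTop (𝓝 v) := tendsto_psnd hyk
    have hwk : Tendsto (fun k => psnd (vk k)) atTop (𝓝 (-w)) := tendsto_psnd hvk
    -- eventual strictness of constraints inactive at x
    have hEvStrict : ∀ᶠ k in atTop, ∀ i, ⟪xs i, x⟫ ≠ c i → ⟪xs i, ak k⟫ < c i := by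
      rw [eventually_all]
      intro i
      by_cases hi : ⟪xs i, x⟫ = c i
      · exact Eventually.of_forall fun k h => absurd hi h
      · have h1 : Tendsto (fun k => ⟪xs i, ak k⟫) atTop (𝓝 ⟪xs i, x⟫) :=
          tendsto_const_nhds.inner hak
        exact (h1.eventually_lt_const (lt_of_le_of_ne (hxC' i) hi)).mono fun k h _ => h
    -- projection inequality
    have keyproj : ∀ (k : ℕ) (q : WithLp 2 (Euc n × Euc n)), q ∈ Ω →
        2 * ⟪zk k - yk k, q - yk k⟫ ≤ ‖q - yk k‖ ^ 2 := by
      intro k q hq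
      have h1 : ‖zk k - yk k‖ ≤ ‖zk k - q‖ := by
        rw [hproj k, ← dist_eq_norm]; exact Metric.infDist_le_dist_of_mem hq
      have h2 : ‖zk k - q‖ ^ 2 =
          ‖zk k - yk k‖ ^ 2 - 2 * ⟪zk k - yk k, q - yk k⟫ + ‖q - yk k‖ ^ 2 := by
        have h3 : zk k - q = (zk k - yk k) - (q - yk k) := by abel
        rw [h3, norm_sub_sq_real]
      nlinarith [pow_le_pow_left₀ (norm_nonneg (zk k - yk k)) h1 2]
    -- main inequality producer
    have keyineq : ∀ (k : ℕ) (η : Euc n),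
        (∀ τ : ℝ, 0 < τ → τ < 1 → pmk (ak k) (pk k + τ • η) ∈ Ω) →
        ⟪psnd (vk k), η⟫ ≤ 0 := by
      intro k η hτΩ
      have hb : (0:ℝ) ≤ tk k * ‖η‖ ^ 2 := mul_nonneg (htk k) (sq_nonneg _)
      have hmain : ∀ τ : ℝ, 0 < τ → τ < 1 →
          (2 * ⟪psnd (vk k), η⟫) * τ ≤ (tk k * ‖η‖ ^ 2) * τ ^ 2 := by
        intro τ hτ0 hτ1
        have h := keyproj k _ (hτΩ τ hτ0 hτ1)
        have hq : pmk (ak k) (pk k + τ • η) - yk k = pmk 0 (τ • η) := by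
          conv_lhs => rw [← pmk_eta (yk k)]
          rw [pmk_sub]
          congr 1
          · simp [hakdef]
          · simp [hpkdef]
        rw [hq] at h
        have hinner : ⟪zk k - yk k, pmk (0 : Euc n) (τ • η)⟫ =
            τ * ⟪psnd (zk k - yk k), η⟫ := by
          have h0 := pinner (pfst (zk k - yk k)) (psnd (zk k - yk k)) (0 : Euc n) (τ • η)
          rw [pmk_eta] at h0
          rw [h0, inner_zero_right, real_inner_smul_right]
          ring
        have hnorm : ‖pmk (0 : Euc n) (τ • η)‖ ^ 2 = τ ^ 2 * ‖η‖ ^ 2 := by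
          rw [pnorm_sq, norm_smul, norm_zero, mul_pow, Real.norm_eq_abs, sq_abs]
          norm_num
        rw [hinner, hnorm] at h
        have hv2 : ⟪psnd (vk k), η⟫ = tk k * ⟪psnd (zk k - yk k), η⟫ := by
          rw [hvdef k, psnd_smul, real_inner_smul_left]
        rw [hv2]
        nlinarith [htk k, mul_le_mul_of_nonneg_left h (htk k)]
      have := tau_le hb hmain
      linarith
    -- inequality ⟪xs i, w⟫ ≥ 0 for positive multipliers
    have hIneq1 : ∀ i, 0 < lam i → (0:ℝ) ≤ ⟪xs i, w⟫ := by
      intro i hpos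
      have hacti : ⟪xs i, x⟫ = c i := by
        by_contra h; rw [hlamsupp i h] at hpos; exact lt_irrefl 0 hpos
      have hWi : Tendsto (fun k => ⟪W i, pk k⟫) atTop (𝓝 ⟪W i, v⟫) :=
        tendsto_const_nhds.inner hpk
      have hl : (0:ℝ) < ⟪W i, v⟫ := by rw [← hlameq i hacti]; exact hpos
      have hev2 : ∀ᶠ k in atTop, 0 < ⟪W i, pk k⟫ := hWi.eventually_const_lt hl
      have hev : ∀ᶠ k in atTop, ⟪psnd (vk k), xs i⟫ ≤ 0 := by
        filter_upwards [hEvStrict, hev2] with k hstrict hposk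
        have hakC : ∀ j, ⟪xs j, ak k⟫ ≤ c j := (hmem _).1 (hyCN k).1
        have hsubk : ∀ j, ⟪xs j, ak k⟫ = c j → ⟪xs j, x⟫ = c j := by
          intro j hj
          by_contra hc
          exact absurd hj (ne_of_lt (hstrict j hc))
        obtain ⟨μ, hμ0, hμsupp, hμsum, hμeq⟩ :=
          farkas xs c x W hW (ak k) hakC hsubk (pk k)
            (fun y hy => (hyCN k).2 y ((hmem y).2 hy))
        have hactak : ⟪xs i, ak k⟫ = c i := by
          by_contra hc
          have h1 := hμsupp i hc
          have h2 := hμeq i hacti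
          rw [h1] at h2
          rw [← h2] at hposk
          exact lt_irrefl 0 hposk
        refine keyineq k (xs i) ?_
        intro τ hτ0 _
        refine ⟨(hyCN k).1, fun y hy => ?_⟩
        rw [psnd_pmk, pfst_pmk, inner_add_left, real_inner_smul_left]
        have h1 := (hyCN k).2 y hy
        have h2 : ⟪xs i, y - ak k⟫ ≤ 0 := by
          rw [inner_sub_right, hactak]
          linarith [(hmem y).1 hy i]
        nlinarith
      have hlim := le_of_tendsto (hwk.inner (tendsto_const_nhds (x := xs i))) hev
      rw [inner_neg_left] at hlim
      rw [real_inner_comm]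
      linarith
    have hIneq2 : ⟪w, v⟫ ≤ 0 := by
      have hev : ∀ k, ⟪psnd (vk k), -(pk k)⟫ ≤ 0 := by
        intro k
        refine keyineq k (-(pk k)) ?_
        intro τ hτ0 hτ1
        refine ⟨(hyCN k).1, fun y hy => ?_⟩
        rw [psnd_pmk, pfst_pmk]
        have h3 : pk k + τ • -(pk k) = (1 - τ) • pk k := by
          rw [smul_neg, sub_smul, one_smul]; abel
        rw [h3, real_inner_smul_left]
        have := (hyCN k).2 y hy
        nlinarith
      have hlimT : Tendsto (fun k => ⟪psnd (vk k), -(pk k)⟫) atTop (𝓝 ⟪-w, -v⟫) :=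
        hwk.inner hpk.neg
      have hlim := le_of_tendsto hlimT (Eventually.of_forall hev)
      rw [inner_neg_neg] at hlim
      exact hlim
    refine ⟨lam, hlam0, hlamsupp, hlamsum, ?_⟩
    intro j hj
    have hterms : ∀ i ∈ Finset.univ, (0:ℝ) ≤ lam i * ⟪w, xs i⟫ := by
      intro i _
      by_cases hpos : 0 < lam i
      · refine mul_nonneg hpos.le ?_
        rw [real_inner_comm]
        exact hIneq1 i hpos
      · have h0 : lam i = 0 := le_antisymm (not_lt.1 hpos) (hlam0 i)
        simp [h0]
    have hsumle : ∑ i, lam i * ⟪w, xs i⟫ ≤ 0 := by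
      have heq : ⟪w, v⟫ = ∑ i, lam i * ⟪w, xs i⟫ := by
        rw [hlamsum, inner_sum]
        exact Finset.sum_congr rfl fun i _ => real_inner_smul_right w (xs i) (lam i)
      linarith
    have hzero := (Finset.sum_eq_zero_iff_of_nonneg hterms).1
      (le_antisymm hsumle (Finset.sum_nonneg hterms)) j (Finset.mem_univ j)
    rw [real_inner_comm]
    exact (mul_eq_zero.1 hzero).resolve_left (ne_of_gt hj)
  · rintro ⟨lam', hl0, hlsupp, hlsum, hlperp⟩
    refine ⟨0, ?_⟩
    have hposact : ∀ i, 0 < lam' i → ⟪xs i, x⟫ = c i := by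
      intro i hi
      by_contra h
      rw [hlsupp i h] at hi
      exact lt_irrefl 0 hi
    -- the auxiliary direction w0
    set Jm : Finset (Fin s) :=
      Finset.univ.filter (fun j => ⟪xs j, x⟫ = c j ∧ ¬ 0 < lam' j) with hJm
    set w0 : Euc n := -(∑ j ∈ Jm, W j) with hw0def
    have hw0 : ∀ i, ⟪xs i, x⟫ = c i → ⟪xs i, w0⟫ = if 0 < lam' i then 0 else -1 := by
      intro i hi
      rw [hw0def, inner_neg_right, inner_sum]
      have hcongr : ∀ j ∈ Jm, ⟪xs i, W j⟫ = if i = j then 1 else 0 := fun j hj =>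
        hW i j hi ((Finset.mem_filter.1 hj).2.1)
      rw [Finset.sum_congr rfl hcongr, Finset.sum_ite_eq]
      by_cases hp : 0 < lam' i
      · have hnot : i ∉ Jm := by
          simp only [hJm, Finset.mem_filter]
          tauto
        rw [if_neg hnot, if_pos hp]
        norm_num
      · have hin : i ∈ Jm := Finset.mem_filter.2 ⟨Finset.mem_univ i, hi, hp⟩
        rw [if_pos hin, if_neg hp]
    -- the key approximation claim
    have key : ∀ ε : ℝ, 0 < ε → ∃ (a : Euc n) (ε' : ℝ), 0 < ε' ∧ ε' ≤ ε ∧ dist a x ≤ ε ∧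
        pmk a v ∈ Ω ∧
        ∀ q ∈ Ω, ‖pmk a (v - ε' • w) - pmk a v‖ ≤ ‖pmk a (v - ε' • w) - q‖ := by
      intro ε hε
      have hδev : ∀ᶠ δ : ℝ in 𝓝[>] (0:ℝ),
          (∀ i, ⟪xs i, x⟫ ≠ c i → ⟪xs i, x + δ • w0⟫ < c i) ∧ δ * ‖w0‖ ≤ ε := by
        refine Filter.Eventually.and ?_ ?_
        · rw [eventually_all]
          intro i
          by_cases hi : ⟪xs i, x⟫ = c i
          · exact Eventually.of_forall fun δ h => absurd hi h
          · have hfe : (fun δ : ℝ => ⟪xs i, x + δ • w0⟫) =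
                fun δ : ℝ => ⟪xs i, x⟫ + δ * ⟪xs i, w0⟫ := by
              funext δ; rw [inner_add_right, real_inner_smul_right]
            have htend : Tendsto (fun δ : ℝ => ⟪xs i, x + δ • w0⟫) (𝓝[>] (0:ℝ))
                (𝓝 ⟪xs i, x⟫) := by
              rw [hfe]
              have h2 : Tendsto (fun δ : ℝ => ⟪xs i, x⟫ + δ * ⟪xs i, w0⟫) (𝓝 (0:ℝ))
                  (𝓝 (⟪xs i, x⟫ + 0 * ⟪xs i, w0⟫)) :=
                tendsto_const_nhds.add (tendsto_id.mul tendsto_const_nhds)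
              simpa using h2.mono_left nhdsWithin_le_nhds
            exact (htend.eventually_lt_const (lt_of_le_of_ne (hxC' i) hi)).mono
              fun δ h _ => h
        · have htend : Tendsto (fun δ : ℝ => δ * ‖w0‖) (𝓝[>] (0:ℝ)) (𝓝 (0 * ‖w0‖)) :=
            (tendsto_id.mul tendsto_const_nhds).mono_left nhdsWithin_le_nhds
          rw [zero_mul] at htend
          exact (htend.eventually_lt_const hε).mono fun δ h => h.le
      obtain ⟨δ, ⟨hδ1, hδ2⟩, hδpos'⟩ := (hδev.and self_mem_nhdsWithin).exists
      have hδpos : (0:ℝ) < δ := hδpos'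
      set a : Euc n := x + δ • w0 with hadef
      have hA1 : ∀ i, 0 < lam' i → ⟪xs i, a⟫ = c i := by
        intro i hi
        rw [hadef, inner_add_right, real_inner_smul_right, hw0 i (hposact i hi), if_pos hi,
          hposact i hi]
        ring
      have hA2 : ∀ i, ¬ 0 < lam' i → ⟪xs i, a⟫ < c i := by
        intro i hi
        by_cases hact : ⟪xs i, x⟫ = c i
        · rw [hadef, inner_add_right, real_inner_smul_right, hw0 i hact, if_neg hi, hact]
          linarith
        · exact hδ1 i hact
      have haC : ∀ j, ⟪xs j, a⟫ ≤ c j := by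
        intro j
        by_cases hp : 0 < lam' j
        · exact le_of_eq (hA1 j hp)
        · exact (hA2 j hp).le
      have hvNa : ∀ y ∈ C, ⟪v, y - a⟫ ≤ 0 := by
        intro y hy
        rw [hlsum, sum_inner]
        refine Finset.sum_nonpos fun i _ => ?_
        rw [real_inner_smul_left]
        by_cases hp : 0 < lam' i
        · have h1 : ⟪xs i, y - a⟫ ≤ 0 := by
            rw [inner_sub_right, hA1 i hp]
            linarith [(hmem y).1 hy i]
          exact mul_nonpos_of_nonneg_of_nonpos (hl0 i) h1
        · have h0 : lam' i = 0 := le_antisymm (not_lt.1 hp) (hl0 i)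
          simp [h0]
      have hρev : ∀ᶠ y : Euc n in 𝓝 a, ∀ i, ¬ 0 < lam' i → ⟪xs i, y⟫ < c i := by
        rw [eventually_all]
        intro i
        by_cases hp : 0 < lam' i
        · exact Eventually.of_forall fun y h => absurd hp h
        · have hcont : Tendsto (fun y : Euc n => ⟪xs i, y⟫) (𝓝 a) (𝓝 ⟪xs i, a⟫) :=
            (Continuous.inner continuous_const continuous_id).tendsto a
          exact (hcont.eventually_lt_const (hA2 i hp)).mono fun y h _ => h
      obtain ⟨ρ, hρpos, hball⟩ := Metric.eventually_nhds_iff.1 hρev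
      set ε' : ℝ := min ε (ρ / (2 * (‖w‖ + 1))) with hε'def
      have hε'pos : 0 < ε' := lt_min hε (by positivity)
      have hε'le : ε' ≤ ε := min_le_left _ _
      have hε'w : ε' * ‖w‖ < ρ := by
        have h1 : ε' ≤ ρ / (2 * (‖w‖ + 1)) := min_le_right _ _
        have h2 : (0:ℝ) ≤ ‖w‖ := norm_nonneg w
        have h3 : ε' * ‖w‖ ≤ ρ / (2 * (‖w‖ + 1)) * ‖w‖ :=
          mul_le_mul_of_nonneg_right h1 h2
        have h4 : ρ / (2 * (‖w‖ + 1)) * ‖w‖ < ρ := by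
          rw [div_mul_eq_mul_div, div_lt_iff₀ (by positivity)]
          nlinarith
        linarith
      refine ⟨a, ε', hε'pos, hε'le, ?_, ⟨(hmem a).2 haC, hvNa⟩, ?_⟩
      · rw [hadef, dist_eq_norm, add_sub_cancel_left, norm_smul, Real.norm_eq_abs,
          abs_of_pos hδpos]
        exact hδ2
      · intro q hq
        obtain ⟨hbC, hpN⟩ := hq
        set b : Euc n := pfst q with hbdef
        set p : Euc n := psnd q with hpdef
        have hLsq : ‖pmk a (v - ε' • w) - pmk a v‖ ^ 2 = ε' ^ 2 * ‖w‖ ^ 2 := by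
          rw [pmk_sub, pnorm_sq, sub_self, norm_zero]
          have h5 : v - ε' • w - v = -(ε' • w) := by abel
          rw [h5, norm_neg, norm_smul, Real.norm_eq_abs, mul_pow, sq_abs]
          norm_num
        have hRsq : ‖pmk a (v - ε' • w) - q‖ ^ 2 = ‖a - b‖ ^ 2 + ‖v - ε' • w - p‖ ^ 2 := by
          conv_lhs => rw [← pmk_eta q]
          rw [pmk_sub, pnorm_sq, hbdef, hpdef]
        have hsq : ‖pmk a (v - ε' • w) - pmk a v‖ ^ 2 ≤ ‖pmk a (v - ε' • w) - q‖ ^ 2 := by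
          rw [hLsq, hRsq]
          by_cases hcase : dist b a < ρ
          · have hstrict := hball hcase
            obtain ⟨τ, hτpos, hfeas1⟩ := exists_step xs c b w ((hmem b).1 hbC) (by
              intro i
              by_cases hp' : 0 < lam' i
              · exact Or.inr (le_of_eq (hlperp i hp'))
              · exact Or.inl (hstrict i hp'))
            obtain ⟨σ, hσpos, hfeas2⟩ := exists_step xs c b (-w) ((hmem b).1 hbC) (by
              intro i
              by_cases hp' : 0 < lam' i
              · refine Or.inr ?_
                rw [inner_neg_right, hlperp i hp']
                norm_num
              · exact Or.inl (hstrict i hp'))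
            have hpw : ⟪p, w⟫ = 0 := by
              have h1 := hpN _ ((hmem _).2 hfeas1)
              have h2 := hpN _ ((hmem _).2 hfeas2)
              rw [add_sub_cancel_left, real_inner_smul_right] at h1 h2
              rw [inner_neg_right] at h2
              nlinarith
            have hvw : ⟪v, w⟫ = 0 := by
              rw [hlsum, sum_inner]
              refine Finset.sum_eq_zero fun i _ => ?_
              rw [real_inner_smul_left]
              by_cases hp' : 0 < lam' i
              · rw [hlperp i hp']; ring
              · have h0 : lam' i = 0 := le_antisymm (not_lt.1 hp') (hl0 i)
                simp [h0]
            have hsnd : ‖v - ε' • w - p‖ ^ 2 = ‖v - p‖ ^ 2 + ε' ^ 2 * ‖w‖ ^ 2 := by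
              have h5 : v - ε' • w - p = (v - p) - ε' • w := by abel
              rw [h5, norm_sub_sq_real, real_inner_smul_right, inner_sub_left, hpw, hvw,
                norm_smul, Real.norm_eq_abs, mul_pow, sq_abs]
              ring
            rw [hsnd]
            nlinarith [sq_nonneg ‖a - b‖, sq_nonneg ‖v - p‖]
          · push_neg at hcase
            have h1 : ρ ≤ ‖a - b‖ := by
              rw [dist_eq_norm] at hcase
              rwa [norm_sub_rev] at hcase
            have h2 : ρ ^ 2 ≤ ‖a - b‖ ^ 2 := pow_le_pow_left₀ hρpos.le h1 2
            nlinarith [sq_nonneg ‖v - ε' • w - p‖, mul_nonneg hε'pos.le (norm_nonneg w),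
              hρpos]
        have := Real.sqrt_le_sqrt hsq
        rwa [Real.sqrt_sq (norm_nonneg _), Real.sqrt_sq (norm_nonneg _)] at this
    -- assemble the sequences
    choose aF εF hεpos hεle hdist hmemF hnear using fun k : ℕ =>
      key (1 / ((k:ℝ) + 1)) (by positivity)
    show pmk (0 : Euc n) (-w) ∈ limNormal Ω (pmk x v)
    refine ⟨fun k => pmk (aF k) (v - εF k • w), fun _ => pmk (0 : Euc n) (-w),
      fun k => (εF k)⁻¹, fun k => pmk (aF k) v, ?_, tendsto_const_nhds,
      fun k => inv_nonneg.2 (hεpos k).le, hmemF, ?_, ?_⟩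
    · have haF : Tendsto aF atTop (𝓝 x) := by
        rw [tendsto_iff_dist_tendsto_zero]
        exact squeeze_zero (fun k => dist_nonneg) hdist
          tendsto_one_div_add_atTop_nhds_zero_nat
      have hεF : Tendsto εF atTop (𝓝 0) :=
        squeeze_zero (fun k => (hεpos k).le) hεle tendsto_one_div_add_atTop_nhds_zero_nat
      have hsndT : Tendsto (fun k => v - εF k • w) atTop (𝓝 v) := by
        have h6 := tendsto_const_nhds (x := v) (f := atTop (α := ℕ)) |>.sub
          (hεF.smul_const w)
        simpa using h6
      exact tendsto_pmk haF hsndT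
    · intro k
      dsimp only
      refine le_antisymm ?_ (by
        rw [← dist_eq_norm]
        exact Metric.infDist_le_dist_of_mem (hmemF k))
      refine le_of_not_gt fun hlt => ?_
      obtain ⟨q, hqΩ, hdq⟩ := (Metric.infDist_lt_iff ⟨_, hmemF k⟩).1 hlt
      have h7 := hnear k q hqΩ
      rw [dist_eq_norm] at hdq
      linarith [h7, hdq]
    · intro k
      have hcomp : pmk (aF k) (v - εF k • w) - pmk (aF k) v =
          pmk (0 : Euc n) (-(εF k • w)) := by
        rw [pmk_sub, sub_self]
        congr 1
        abel
      rw [hcomp, smul_pmk, smul_zero, smul_neg, smul_smul,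
        inv_mul_cancel₀ (ne_of_gt (hεpos k)), one_smul]
end
end

section
/- Let C ⊆ ℝⁿ be the convex polyhedron determined by vectors x*_1,…,x*_s ∈ ℝⁿ and scalars c_1,…,c_s, let U ⊆ ℝ^d be nonempty and compact, and let g : ℝⁿ×ℝ^d → ℝⁿ satisfy the standing assumptions. Let (x̄,ū) be a feasible pair for problem (P) on [0,T] and assume PLICQ holds at x̄(t) for every t ∈ [0,T]. Then there exist Lebesgue measurable functions η¹,…,ηˢ : [0,T] → [0,∞) with ∫₀ᵀ η^j(t)² dt < ∞ for each j, such that η^j(t) = 0 whenever ⟨x*_j, x̄(t)⟩ < c_j, and −ẋ̄(t) = Σ_{j=1}^s η^j(t) x*_j + g(x̄(t), ū(t)) for a.e. t ∈ [0,T]. -/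
open Filter Topology Set MeasureTheory
open scoped RealInnerProductSpace

noncomputable section

/-- PLICQ (positive linear independence constraint qualification) for the polyhedron
determined by `xs` and `c`, at the point `x`. -/
def PLICQ {n s : ℕ} (xs : Fin s → Euc n) (c : Fin s → ℝ) (x : Euc n) : Prop :=
  ∀ α : Fin s → ℝ, (∀ j, 0 ≤ α j) → (∀ j, ⟪xs j, x⟫ ≠ c j → α j = 0) →
    (∑ j, α j • xs j) = 0 → ∀ j, α j = 0

/-- A feasible pair of the sweeping optimal control problem `(P)`: `x` is absolutely
continuous on `[0,T]` with derivative `x' ∈ L²`, starts at `x0`, the control `u` is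
measurable with values in `Uset` a.e., and the sweeping inclusion
`-ẋ(t) ∈ N(x(t);C) + g(x(t),u(t))` holds a.e. on `[0,T]`. -/
def FeasibleP {n d : ℕ} (T : ℝ) (x0 : Euc n)
    (C : Set (Euc n)) (Uset : Set (Euc d))
    (g : WithLp 2 (Euc n × Euc d) → Euc n)
    (x x' : ℝ → Euc n) (u : ℝ → Euc d) : Prop :=
  x 0 = x0 ∧
  (∀ t ∈ Set.Icc 0 T, x t = x0 + ∫ s in (0:ℝ)..t, x' s) ∧
  IntegrableOn x' (Set.Icc 0 T) ∧
  IntegrableOn (fun t => ‖x' t‖ ^ 2) (Set.Icc 0 T) ∧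
  AEStronglyMeasurable u (volume.restrict (Set.Icc 0 T)) ∧
  (∀ᵐ t ∂(volume : Measure ℝ), t ∈ Set.Icc 0 T → u t ∈ Uset) ∧
  (∀ᵐ t ∂(volume : Measure ℝ), t ∈ Set.Icc 0 T →
    ∃ v ∈ convNormal C (x t), -x' t = v + g (pmk (x t) (u t)))

/-- A function is piecewise constant on `[0,T]` if there is a finite partition of
`[0,T]` on each of whose subintervals the function is constant. -/
def PiecewiseConstOn {F : Type*} (u : ℝ → F) (T : ℝ) : Prop :=
  ∃ (l : ℕ) (τ : ℕ → ℝ), τ 0 = 0 ∧ τ l = T ∧ (∀ i < l, τ i < τ (i + 1)) ∧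
    ∀ i < l, ∀ t ∈ Set.Ico (τ i) (τ (i + 1)), u t = u (τ i)

/-- `(xb, ub)` (with `xb' ` the derivative of `xb`) is a relaxed `W^{1,2} × L²` local
minimizer of problem `(P)` with modulus `ε`. -/
def RelaxedLocalMin {n d : ℕ} (T : ℝ) (x0 : Euc n) (C : Set (Euc n)) (Uset : Set (Euc d))
    (g : WithLp 2 (Euc n × Euc d) → Euc n) (φ : Euc n → ℝ)
    (xb xb' : ℝ → Euc n) (ub : ℝ → Euc d) (ε : ℝ) : Prop :=
  ∀ (y y' : ℝ → Euc n) (u : ℝ → Euc d),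
    AEStronglyMeasurable u (volume.restrict (Set.Icc 0 T)) →
    (∀ᵐ t ∂(volume : Measure ℝ), t ∈ Set.Icc 0 T → u t ∈ convexHull ℝ Uset) →
    y 0 = x0 →
    (∀ t ∈ Set.Icc 0 T, y t = x0 + ∫ s in (0:ℝ)..t, y' s) →
    IntegrableOn y' (Set.Icc 0 T) →
    IntegrableOn (fun t => ‖y' t‖ ^ 2) (Set.Icc 0 T) →
    (∀ᵐ t ∂(volume : Measure ℝ), t ∈ Set.Icc 0 T →
      ∃ v ∈ convNormal C (y t),
        ∃ w ∈ convexHull ℝ ((fun uu => g (pmk (y t) uu)) '' Uset), -y' t = v + w) →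
    (∃ (yk yk' : ℕ → ℝ → Euc n) (uk : ℕ → ℝ → Euc d),
      (∀ k, FeasibleP T x0 C Uset g (yk k) (yk' k) (uk k) ∧ PiecewiseConstOn (uk k) T) ∧
      Tendsto (fun k => ∫ t in (0:ℝ)..T, (‖yk k t - y t‖ ^ 2 + ‖yk' k t - y' t‖ ^ 2))
        atTop (𝓝 0) ∧
      (∃ v : ℕ → ℝ → Euc d,
        (∀ k, ∃ (M : ℕ) (lw : ℕ → ℝ), (∀ i, 0 ≤ lw i) ∧ (∑ i ∈ Finset.range M, lw i) = 1 ∧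
          ∀ t, v k t = ∑ i ∈ Finset.range M, lw i • uk i t) ∧
        Tendsto (fun k => ∫ t in (0:ℝ)..T, ‖v k t - u t‖ ^ 2) atTop (𝓝 0))) →
    (∫ t in (0:ℝ)..T, (‖y' t - xb' t‖ ^ 2 + ‖u t - ub t‖ ^ 2)) < ε →
    φ (xb T) ≤ φ (y T)


section Aux
variable {n s : ℕ}

def spanB (xs : Fin s → Euc n) (B : Finset (Fin s)) : Submodule ℝ (Euc n) :=
  Submodule.span ℝ (Set.range fun i : B => xs (i : Fin s))

open Classical in
noncomputable def coeffL (xs : Fin s → Euc n) (B : Finset (Fin s)) (j : Fin s) :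
    Euc n →L[ℝ] ℝ :=
  if h : LinearIndependent ℝ (fun i : B => xs (i : Fin s)) ∧ j ∈ B then
    (LinearMap.toContinuousLinearMap
      ((Finsupp.lapply (⟨j, h.2⟩ : B)).comp (Module.Basis.span h.1).repr.toLinearMap)).comp
      (Submodule.orthogonalProjectionOnto (spanB xs B) : Euc n →L[ℝ] spanB xs B)
  else 0

lemma coeffL_of_not_mem (xs : Fin s → Euc n) {B : Finset (Fin s)} {j : Fin s}
    (hj : j ∉ B) (v : Euc n) : coeffL xs B j v = 0 := by
  rw [coeffL, dif_neg (fun h => hj h.2)]; rfl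

lemma coeffL_eq (xs : Fin s → Euc n) {B : Finset (Fin s)}
    (hli : LinearIndependent ℝ (fun i : B => xs (i : Fin s)))
    (β : Fin s → ℝ) (hβ : ∀ j ∉ B, β j = 0) (j : Fin s) :
    coeffL xs B j (∑ j', β j' • xs j') = β j := by
  set v : Euc n := ∑ j', β j' • xs j' with hv
  have hv' : v = ∑ i : B, β (i : Fin s) • xs (i : Fin s) := by
    rw [hv, Finset.sum_coe_sort B (fun i => β i • xs i)]
    exact (Finset.sum_subset (Finset.subset_univ B)
      (fun j' _ hj' => by rw [hβ j' hj', zero_smul])).symm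
  have hvW : v ∈ spanB xs B := by
    rw [hv']
    exact Submodule.sum_mem _ fun i _ =>
      Submodule.smul_mem _ _ (Submodule.subset_span ⟨i, rfl⟩)
  by_cases hj : j ∈ B
  · rw [coeffL, dif_pos ⟨hli, hj⟩]
    have hproj : Submodule.orthogonalProjectionOnto (spanB xs B) v = ⟨v, hvW⟩ := by
      exact Submodule.orthogonalProjectionOnto_mem_subspace_eq_self (⟨v, hvW⟩ : spanB xs B)
    have hsub : (⟨v, hvW⟩ : spanB xs B) = ∑ i : B, β (i : Fin s) • (Module.Basis.span hli) i := by
      apply Subtype.ext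
      push_cast [Module.Basis.span_apply]
      exact hv'
    have hrepr : ⇑((Module.Basis.span hli).repr (⟨v, hvW⟩ : spanB xs B)) =
        fun i : B => β (i : Fin s) := by
      rw [hsub]; exact Module.Basis.repr_sum_self _ _
    simp only [ContinuousLinearMap.comp_apply, LinearMap.coe_toContinuousLinearMap',
      LinearMap.comp_apply, LinearEquiv.coe_toLinearMap, Finsupp.lapply_apply]
    show ((Module.Basis.span hli).repr (Submodule.orthogonalProjectionOnto (spanB xs B) v)) ⟨j, hj⟩ = β j
    rw [hproj]
    exact (congrFun hrepr ⟨j, hj⟩)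
  · rw [coeffL_of_not_mem xs hj, hβ j hj]

lemma cara (xs : Fin s → Euc n) (I : Finset (Fin s)) :
    ∀ (α : Fin s → ℝ), (∀ j, 0 ≤ α j) → (∀ j ∉ I, α j = 0) →
    ∃ B : Finset (Fin s), B ⊆ I ∧ LinearIndependent ℝ (fun i : B => xs (i : Fin s)) ∧
      ∃ β : Fin s → ℝ, (∀ j, 0 ≤ β j) ∧ (∀ j ∉ B, β j = 0) ∧
        ∑ j, β j • xs j = ∑ j, α j • xs j := by
  induction I using Finset.strongInductionOn with
  | _ I ih =>
    intro α hα hsupp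
    by_cases hli : LinearIndependent ℝ (fun i : I => xs (i : Fin s))
    · exact ⟨I, subset_rfl, hli, α, hα, hsupp, rfl⟩
    · obtain ⟨γ, hγsum, i₀, hi₀⟩ := Fintype.not_linearIndependent_iff.mp hli
      set ε : ℝ := if 0 < γ i₀ then 1 else -1 with hε
      set lam : Fin s → ℝ := fun j => if h : j ∈ I then ε * γ ⟨j, h⟩ else 0 with hlam
      have hlam0 : ∑ j, lam j • xs j = 0 := by
        have h1 : ∑ j, lam j • xs j = ∑ j ∈ I, lam j • xs j :=
          (Finset.sum_subset (Finset.subset_univ I)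
            (fun j _ hj => by simp [hlam, dif_neg hj])).symm
        rw [h1, ← Finset.sum_coe_sort I (fun j => lam j • xs j)]
        have h2 : ∀ i : I, lam (i : Fin s) • xs (i : Fin s) = ε • (γ i • xs (i : Fin s)) := by
          intro i
          simp [hlam, dif_pos i.2, mul_smul]
        rw [Finset.sum_congr rfl (fun i _ => h2 i), ← Finset.smul_sum, hγsum, smul_zero]
      have hlami₀ : 0 < lam (i₀ : Fin s) := by
        rw [hlam]
        simp only [dif_pos i₀.2]
        rcases lt_trichotomy (γ i₀) 0 with h | h | h
        · have : ε = -1 := by rw [hε, if_neg (by linarith)]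
          rw [show (⟨(i₀ : Fin s), i₀.2⟩ : I) = i₀ from Subtype.ext rfl, this]; nlinarith
        · exact absurd h hi₀
        · have : ε = 1 := by rw [hε, if_pos h]
          rw [show (⟨(i₀ : Fin s), i₀.2⟩ : I) = i₀ from Subtype.ext rfl, this]; linarith
      set P := I.filter (fun j => 0 < lam j) with hP
      have hPne : P.Nonempty := ⟨i₀, Finset.mem_filter.mpr ⟨i₀.2, hlami₀⟩⟩
      obtain ⟨j₀, hj₀P, hmin⟩ := Finset.exists_min_image P (fun j => α j / lam j) hPne
      have hj₀I : j₀ ∈ I := (Finset.mem_filter.mp hj₀P).1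
      have hlamj₀ : 0 < lam j₀ := (Finset.mem_filter.mp hj₀P).2
      set t := α j₀ / lam j₀ with htdef
      have ht0 : 0 ≤ t := div_nonneg (hα _) hlamj₀.le
      set α' : Fin s → ℝ := fun j => α j - t * lam j with hα'
      have hα'0 : ∀ j, 0 ≤ α' j := by
        intro j
        by_cases hpos : 0 < lam j
        · have hjI : j ∈ I := by
            by_contra hjI
            rw [hlam] at hpos; simp [dif_neg hjI] at hpos
          have h2 : t * lam j ≤ α j :=
            (le_div_iff₀ hpos).mp (hmin j (Finset.mem_filter.mpr ⟨hjI, hpos⟩))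
          rw [hα']; simp only; linarith
        · push_neg at hpos
          rw [hα']; simp only
          nlinarith [hα j]
      have hsupp' : ∀ j ∉ I.erase j₀, α' j = 0 := by
        intro j hj
        by_cases hjj : j = j₀
        · subst hjj
          rw [hα']; simp only [htdef]
          field_simp
          ring
        · have hjI : j ∉ I := fun hmem => hj (Finset.mem_erase.mpr ⟨hjj, hmem⟩)
          rw [hα']; simp only
          rw [hsupp j hjI, hlam]; simp [dif_neg hjI]
      have hsum : ∑ j, α' j • xs j = ∑ j, α j • xs j := by
        rw [hα']
        simp only [sub_smul, Finset.sum_sub_distrib, mul_smul]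
        rw [← Finset.smul_sum, hlam0, smul_zero, sub_zero]
      obtain ⟨B, hBsub, hBli, β, hβ0, hβsupp, hβsum⟩ :=
        ih (I.erase j₀) (Finset.erase_ssubset hj₀I) α' hα'0 hsupp'
      exact ⟨B, hBsub.trans (Finset.erase_subset _ _), hBli, β, hβ0, hβsupp,
        hβsum.trans hsum⟩

open Classical in
lemma farkas_s15 (xs : Fin s → Euc n) (c : Fin s → ℝ) (x v : Euc n)
    (hx : ∀ j, ⟪xs j, x⟫ ≤ c j)
    (hv : ∀ y : Euc n, (∀ j, ⟪xs j, y⟫ ≤ c j) → ⟪v, y - x⟫ ≤ 0) :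
    ∃ α : Fin s → ℝ, (∀ j, 0 ≤ α j) ∧ (∀ j, ⟪xs j, x⟫ < c j → α j = 0) ∧
      ∑ j, α j • xs j = v := by
  set I : Finset (Fin s) := Finset.univ.filter (fun j => ⟪xs j, x⟫ = c j) with hI
  set K : Set (Euc n) := {w | ∃ α : Fin s → ℝ, (∀ j, 0 ≤ α j) ∧ (∀ j ∉ I, α j = 0) ∧
    ∑ j, α j • xs j = w} with hK
  have hmemI : ∀ j, j ∉ I → ⟪xs j, x⟫ < c j := by
    intro j hj
    rcases lt_or_eq_of_le (hx j) with h | h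
    · exact h
    · exact absurd (Finset.mem_filter.mpr ⟨Finset.mem_univ j, h⟩) hj
  -- closedness of K
  have hKeq : K = ⋃ B ∈ {B : Finset (Fin s) | B ⊆ I ∧
      LinearIndependent ℝ (fun i : B => xs (i : Fin s))},
      {w : Euc n | (∀ j, 0 ≤ coeffL xs B j w) ∧ ∑ j, coeffL xs B j w • xs j = w} := by
    ext w
    simp only [Set.mem_setOf_eq, Set.mem_iUnion, exists_prop]
    constructor
    · rintro ⟨α, hα0, hαsupp, hαsum⟩
      obtain ⟨B, hBsub, hBli, β, hβ0, hβsupp, hβsum⟩ := cara xs I α hα0 hαsupp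
      refine ⟨B, ⟨hBsub, hBli⟩, ?_, ?_⟩
      · intro j
        rw [← hβsum.trans hαsum, coeffL_eq xs hBli β hβsupp j]
        exact hβ0 j
      · have h1 : ∀ j, coeffL xs B j w = β j := by
          intro j
          rw [← hβsum.trans hαsum, coeffL_eq xs hBli β hβsupp j]
        rw [Finset.sum_congr rfl (fun j _ => by rw [h1 j])]
        exact hβsum.trans hαsum
    · rintro ⟨B, ⟨hBsub, hBli⟩, h0, hsum⟩
      exact ⟨fun j => coeffL xs B j w, h0,
        fun j hj => coeffL_of_not_mem xs (fun hB => hj (hBsub hB)) w, hsum⟩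
  have hKclosed : IsClosed K := by
    rw [hKeq]
    refine Set.Finite.isClosed_biUnion (Set.toFinite _) (fun B _ => ?_)
    have heq : {w : Euc n | (∀ j, 0 ≤ coeffL xs B j w) ∧
        ∑ j, coeffL xs B j w • xs j = w} =
        (⋂ j, {w : Euc n | 0 ≤ coeffL xs B j w}) ∩
        {w : Euc n | ∑ j, coeffL xs B j w • xs j = w} := by
      ext w; simp [Set.mem_iInter]
    rw [heq]
    refine IsClosed.inter ?_ ?_
    · exact isClosed_iInter fun j =>
        isClosed_le continuous_const (coeffL xs B j).continuous
    · exact isClosed_eq (continuous_finset_sum _ fun j _ => ((coeffL xs B j).continuous).smul continuous_const) continuous_id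
  have hKconvex : Convex ℝ K := by
    rintro w1 ⟨α1, h10, h1s, h1sum⟩ w2 ⟨α2, h20, h2s, h2sum⟩ a b ha hb hab
    refine ⟨fun j => a * α1 j + b * α2 j,
      fun j => add_nonneg (mul_nonneg ha (h10 j)) (mul_nonneg hb (h20 j)),
      fun j hj => by show a * α1 j + b * α2 j = 0; rw [h1s j hj, h2s j hj]; ring, ?_⟩
    simp only [add_smul, mul_smul, Finset.sum_add_distrib, ← Finset.smul_sum,
      h1sum, h2sum]
  by_cases hvK : v ∈ K
  · obtain ⟨α, h0, hs, hsum⟩ := hvK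
    exact ⟨α, h0, fun j hj => hs j (fun hmem =>
      absurd (Finset.mem_filter.mp hmem).2 (ne_of_lt hj)), hsum⟩
  · exfalso
    obtain ⟨f, u, hfa, hfv⟩ := geometric_hahn_banach_closed_point hKconvex hKclosed hvK
    set h : Euc n := (InnerProductSpace.toDual ℝ (Euc n)).symm f with hh
    have hhz : ∀ z : Euc n, ⟪h, z⟫ = f z := fun z =>
      InnerProductSpace.toDual_symm_apply
    have h0K : (0 : Euc n) ∈ K :=
      ⟨fun _ => 0, fun j => le_refl 0, fun j _ => rfl, by simp⟩
    have hu0 : 0 < u := by have := hfa 0 h0K; rwa [map_zero] at this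
    have hhj : ∀ j ∈ I, ⟪h, xs j⟫ ≤ 0 := by
      intro j hj
      by_contra hp
      push_neg at hp
      set tt := (u + 1) / ⟪h, xs j⟫ with htt
      have httpos : 0 < tt := div_pos (by linarith) hp
      have hwK : tt • xs j ∈ K := by
        refine ⟨fun j' => if j' = j then tt else 0, fun j' => by positivity,
          fun j' hj' => if_neg (by rintro rfl; exact hj' hj), ?_⟩
        have hsplit : ∀ j' : Fin s, (if j' = j then tt else 0) • xs j' =
            if j' = j then tt • xs j else 0 := by
          intro j'; split
          · subst ‹j' = j›; rfl
          · exact zero_smul _ _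
        rw [Finset.sum_congr rfl (fun j' _ => hsplit j')]
        simp
      have := hfa _ hwK
      rw [← hhz, real_inner_smul_right, htt, div_mul_cancel₀ _ (ne_of_gt hp)] at this
      linarith
    have hfeas : ∀ᶠ δ in 𝓝[>] (0:ℝ), ∀ j, ⟪xs j, x + δ • h⟫ ≤ c j := by
      rw [eventually_all]
      intro j
      by_cases hj : j ∈ I
      · filter_upwards [self_mem_nhdsWithin] with δ hδ
        rw [inner_add_right, real_inner_smul_right]
        have h1 : ⟪xs j, x⟫ = c j := (Finset.mem_filter.mp hj).2
        have h2 : ⟪xs j, h⟫ ≤ 0 := by rw [real_inner_comm]; exact hhj j hj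
        have : (0:ℝ) < δ := hδ
        nlinarith
      · have hlt := hmemI j hj
        have hcont : Tendsto (fun δ : ℝ => ⟪xs j, x + δ • h⟫) (𝓝 0) (𝓝 ⟪xs j, x + (0:ℝ) • h⟫) := by
          apply Continuous.tendsto
          exact Continuous.inner continuous_const
            (continuous_const.add (continuous_id.smul continuous_const))
        rw [zero_smul, add_zero] at hcont
        have := hcont.eventually_lt_const hlt
        exact (this.filter_mono nhdsWithin_le_nhds).mono (fun δ hδ => le_of_lt hδ)
    obtain ⟨δ, hδfeas, hδpos⟩ := (hfeas.and self_mem_nhdsWithin).exists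
    have hvy := hv (x + δ • h) hδfeas
    rw [add_sub_cancel_left, real_inner_smul_right] at hvy
    have hδp : (0:ℝ) < δ := hδpos
    have hvh : ⟪v, h⟫ ≤ 0 := by
      by_contra hc; push_neg at hc; nlinarith
    have hfin : ⟪h, v⟫ ≤ 0 := by rwa [real_inner_comm]
    rw [hhz] at hfin
    linarith

def good (xs : Fin s → Euc n) (c : Fin s → ℝ) (B : Finset (Fin s)) (p : Euc n × Euc n) : Prop :=
  LinearIndependent ℝ (fun i : B => xs (i : Fin s)) ∧
  (∀ j ∈ B, ⟪xs j, p.1⟫ = c j) ∧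
  (∀ j, 0 ≤ coeffL xs B j p.2) ∧
  (∑ j, coeffL xs B j p.2 • xs j = p.2)

lemma isClosed_good (xs : Fin s → Euc n) (c : Fin s → ℝ) (B : Finset (Fin s)) :
    IsClosed {p : Euc n × Euc n | good xs c B p} := by
  by_cases hli : LinearIndependent ℝ (fun i : B => xs (i : Fin s))
  · have heq : {p : Euc n × Euc n | good xs c B p} =
        (⋂ j ∈ B, {p : Euc n × Euc n | ⟪xs j, p.1⟫ = c j}) ∩
        ((⋂ j, {p : Euc n × Euc n | 0 ≤ coeffL xs B j p.2}) ∩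
         {p : Euc n × Euc n | ∑ j, coeffL xs B j p.2 • xs j = p.2}) := by
      ext p
      simp only [good, Set.mem_setOf_eq, Set.mem_inter_iff, Set.mem_iInter]
      tauto
    rw [heq]
    refine IsClosed.inter ?_ (IsClosed.inter ?_ ?_)
    · exact isClosed_biInter fun j _ =>
        isClosed_eq (continuous_const.inner continuous_fst) continuous_const
    · exact isClosed_iInter fun j => isClosed_le continuous_const
        ((coeffL xs B j).continuous.comp continuous_snd)
    · exact isClosed_eq
        (continuous_finset_sum _ fun j _ =>
          ((coeffL xs B j).continuous.comp continuous_snd).smul continuous_const)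
        continuous_snd
  · have heq : {p : Euc n × Euc n | good xs c B p} = ∅ := by
      ext p; simp [good, hli]
    rw [heq]; exact isClosed_empty

def chosen (xs : Fin s → Euc n) (c : Fin s → ℝ) (B : Finset (Fin s))
    (p : Euc n × Euc n) : Prop :=
  good xs c B p ∧ ∀ B' : Finset (Fin s),
    Encodable.encode B' < Encodable.encode B → ¬ good xs c B' p

lemma measurableSet_chosen (xs : Fin s → Euc n) (c : Fin s → ℝ) (B : Finset (Fin s)) :
    MeasurableSet {p : Euc n × Euc n | chosen xs c B p} := by
  have heq : {p : Euc n × Euc n | chosen xs c B p} =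
      {p | good xs c B p} ∩
      ⋂ B' : Finset (Fin s), ⋂ (_ : Encodable.encode B' < Encodable.encode B),
        {p | good xs c B' p}ᶜ := by
    ext p
    simp only [chosen, Set.mem_inter_iff, Set.mem_setOf_eq, Set.mem_iInter, Set.mem_compl_iff]
  rw [heq]
  exact ((isClosed_good xs c B).measurableSet).inter
    (MeasurableSet.iInter fun B' => MeasurableSet.iInter fun _ =>
      (isClosed_good xs c B').measurableSet.compl)

lemma chosen_unique (xs : Fin s → Euc n) (c : Fin s → ℝ) {B B' : Finset (Fin s)}
    {p : Euc n × Euc n} (h : chosen xs c B p) (h' : chosen xs c B' p) : B = B' := by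
  rcases lt_trichotomy (Encodable.encode B) (Encodable.encode B') with hlt | heq | hlt
  · exact absurd h.1 (h'.2 B hlt)
  · exact Encodable.encode_injective heq
  · exact absurd h'.1 (h.2 B' hlt)

open Classical in
lemma chosen_exists (xs : Fin s → Euc n) (c : Fin s → ℝ) {B : Finset (Fin s)}
    {p : Euc n × Euc n} (h : good xs c B p) : ∃ B₀, chosen xs c B₀ p := by
  obtain ⟨B₀, hB₀mem, hmin⟩ := Finset.exists_min_image
    (Finset.univ.filter (fun B' : Finset (Fin s) => good xs c B' p))
    (fun B' => Encodable.encode B')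
    ⟨B, Finset.mem_filter.mpr ⟨Finset.mem_univ _, h⟩⟩
  refine ⟨B₀, (Finset.mem_filter.mp hB₀mem).2, fun B' hlt hgood => ?_⟩
  exact absurd (hmin B' (Finset.mem_filter.mpr ⟨Finset.mem_univ _, hgood⟩))
    (not_le.mpr hlt)

end Aux

/-- measurable multiplier representation of the velocity of a feasible
sweeping trajectory under PLICQ. -/
theorem statement15 (n d s : ℕ) (T : ℝ) (hT : 0 < T)
    (xs : Fin s → Euc n) (c : Fin s → ℝ)
    (C : Set (Euc n)) (hC : C = {x | ∀ j, ⟪xs j, x⟫ ≤ c j})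
    (x0 : Euc n) (hx0 : x0 ∈ C)
    (φ : Euc n → ℝ) (hφ : LocallyLipschitz φ)
    (Uset : Set (Euc d)) (hUc : IsCompact Uset) (hUne : Uset.Nonempty)
    (g : WithLp 2 (Euc n × Euc d) → Euc n)
    (hgLip : ∀ B : Set (WithLp 2 (Euc n × Euc d)), Bornology.IsBounded B →
      ∃ K : NNReal, LipschitzOnWith K g B)
    (hgrow : ∃ β > (0:ℝ), ∀ (x : Euc n), ∀ u ∈ Uset, ‖g (pmk x u)‖ ≤ β * (1 + ‖x‖))
    (xb xb' : ℝ → Euc n) (ub : ℝ → Euc d)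
    (hfeas : FeasibleP T x0 C Uset g xb xb' ub)
    (hPLICQ : ∀ t ∈ Set.Icc 0 T, PLICQ xs c (xb t)) :
    ∃ η : Fin s → ℝ → ℝ,
      (∀ j, Measurable (η j)) ∧
      (∀ j, ∀ t ∈ Set.Icc 0 T, 0 ≤ η j t) ∧
      (∀ j, IntegrableOn (fun t => (η j t) ^ 2) (Set.Icc 0 T)) ∧
      (∀ j, ∀ t ∈ Set.Icc 0 T, ⟪xs j, xb t⟫ < c j → η j t = 0) ∧
      (∀ᵐ t ∂(volume : Measure ℝ), t ∈ Set.Icc 0 T →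
        -xb' t = ∑ j, η j t • xs j + g (pmk (xb t) (ub t))) := by
    classical
  obtain ⟨hx0', hxint, hx'int, hx'sq, hubm, hubU, hincl⟩ := hfeas
  obtain ⟨β, hβ0, hgβ⟩ := hgrow
  -- continuous extension of xb
  set clamp : ℝ → ℝ := fun t => max 0 (min t T) with hclampdef
  have hclamp_cont : Continuous clamp :=
    continuous_const.max (continuous_id.min continuous_const)
  have hclamp_maps : ∀ t, clamp t ∈ Set.Icc (0:ℝ) T := fun t =>
    ⟨le_max_left _ _, max_le hT.le (min_le_right _ _)⟩
  have hprim : ContinuousOn (fun r => ∫ s' in (0:ℝ)..r, xb' s') (Set.Icc 0 T) := by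
    have h1 : IntegrableOn xb' (Set.uIcc (0:ℝ) T) volume := by
      rwa [Set.uIcc_of_le hT.le]
    have h2 := intervalIntegral.continuousOn_primitive_interval h1
    rwa [Set.uIcc_of_le hT.le] at h2
  set xt : ℝ → Euc n := fun t => x0 + ∫ s' in (0:ℝ)..(clamp t), xb' s' with hxtdef
  have hxt_cont : Continuous xt :=
    continuous_const.add (hprim.comp_continuous hclamp_cont hclamp_maps)
  have hxt_eq : ∀ t ∈ Set.Icc 0 T, xt t = xb t := by
    intro t ht
    have hcl : clamp t = t := by
      rw [hclampdef]; simp only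
      rw [min_eq_left ht.2, max_eq_right ht.1]
    rw [hxtdef]; simp only [hcl]
    exact (hxint t ht).symm
  obtain ⟨Mx, hMx⟩ := (isCompact_Icc (a := (0:ℝ)) (b := T)).exists_bound_of_continuousOn
    hxt_cont.continuousOn
  have hg_cont : Continuous g := by
    rw [continuous_iff_continuousAt]
    intro z
    obtain ⟨K, hK⟩ := hgLip (Metric.closedBall z 1) Metric.isBounded_closedBall
    exact hK.continuousOn.continuousAt (Metric.closedBall_mem_nhds z one_pos)
  have hpmk_cont : Continuous (fun q : Euc n × Euc d => pmk q.1 q.2) := by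
    have heqd : (fun q : Euc n × Euc d => pmk q.1 q.2) =
        ⇑(WithLp.prodContinuousLinearEquiv 2 ℝ (Euc n) (Euc d)).symm := rfl
    rw [heqd]
    exact (WithLp.prodContinuousLinearEquiv 2 ℝ (Euc n) (Euc d)).symm.continuous
  set dfun : ℝ → Euc n := fun t => -xb' t - g (pmk (xb t) (ub t)) with hdfundef
  have hxbm : AEStronglyMeasurable xb (volume.restrict (Set.Icc 0 T)) := by
    refine hxt_cont.aestronglyMeasurable.congr ?_
    exact (ae_restrict_iff' measurableSet_Icc).mpr (ae_of_all _ fun t ht => hxt_eq t ht)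
  have hgcomp : AEStronglyMeasurable (fun t => g (pmk (xb t) (ub t)))
      (volume.restrict (Set.Icc 0 T)) :=
    (hg_cont.comp hpmk_cont).comp_aestronglyMeasurable (hxbm.prodMk hubm)
  have hdm : AEStronglyMeasurable dfun (volume.restrict (Set.Icc 0 T)) :=
    (hx'int.aestronglyMeasurable.neg).sub hgcomp
  set w : ℝ → Euc n := hdm.mk dfun with hwdef
  have hw_meas : Measurable w := hdm.stronglyMeasurable_mk.measurable
  have hw_eq : ∀ᵐ t ∂(volume : Measure ℝ), t ∈ Set.Icc 0 T → dfun t = w t :=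
    (ae_restrict_iff' measurableSet_Icc).mp hdm.ae_eq_mk
  have hpair : Measurable (fun t => (xt t, w t)) :=
    (hxt_cont.measurable).prodMk hw_meas
  set η : Fin s → ℝ → ℝ := fun j t => ∑ B : Finset (Fin s),
    Set.indicator {t' : ℝ | chosen xs c B (xt t', w t')}
      (fun t' => coeffL xs B j (w t')) t with hηdef
  have hsetmeas : ∀ B : Finset (Fin s),
      MeasurableSet {t' : ℝ | chosen xs c B (xt t', w t')} :=
    fun B => hpair (measurableSet_chosen xs c B)
  have hη_meas : ∀ j, Measurable (η j) := by
    intro j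
    refine Finset.measurable_sum _ fun B _ => Measurable.indicator ?_ (hsetmeas B)
    exact (coeffL xs B j).continuous.measurable.comp hw_meas
  have heta_eq : ∀ (t : ℝ) (B₀ : Finset (Fin s)), chosen xs c B₀ (xt t, w t) →
      ∀ j, η j t = coeffL xs B₀ j (w t) := by
    intro t B₀ hch j
    have hz : ∀ B' ∈ (Finset.univ : Finset (Finset (Fin s))), B' ≠ B₀ →
        Set.indicator {t' : ℝ | chosen xs c B' (xt t', w t')}
          (fun t' => coeffL xs B' j (w t')) t = 0 := fun B' _ hBne =>
      Set.indicator_of_notMem (s := {t' : ℝ | chosen xs c B' (xt t', w t')})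
        (fun hmem => hBne (chosen_unique xs c hmem hch)) _
    rw [hηdef]
    simp only
    rw [Finset.sum_eq_single_of_mem B₀ (Finset.mem_univ _) hz]
    exact Set.indicator_of_mem (show t ∈ {t' : ℝ | chosen xs c B₀ (xt t', w t')} from hch) _
  have heta_zero : ∀ t : ℝ, (∀ B, ¬ chosen xs c B (xt t, w t)) → ∀ j, η j t = 0 := by
    intro t h j
    rw [hηdef]; simp only
    exact Finset.sum_eq_zero fun B _ => Set.indicator_of_notMem
      (s := {t' : ℝ | chosen xs c B (xt t', w t')}) (h B) _
  have hη_nonneg : ∀ (j : Fin s) (t : ℝ), 0 ≤ η j t := by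
    intro j t
    by_cases hex : ∃ B, chosen xs c B (xt t, w t)
    · obtain ⟨B₀, hB₀⟩ := hex
      rw [heta_eq t B₀ hB₀ j]
      exact hB₀.1.2.2.1 j
    · push_neg at hex
      rw [heta_zero t hex j]
  have hη_bound : ∀ j, ∃ Kb : ℝ, 0 ≤ Kb ∧ ∀ t, |η j t| ≤ Kb * ‖w t‖ := by
    intro j
    refine ⟨∑ B : Finset (Fin s), ‖coeffL xs B j‖,
      Finset.sum_nonneg fun B _ => norm_nonneg _, fun t => ?_⟩
    by_cases hex : ∃ B, chosen xs c B (xt t, w t)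
    · obtain ⟨B₀, hB₀⟩ := hex
      rw [heta_eq t B₀ hB₀ j]
      calc |coeffL xs B₀ j (w t)| ≤ ‖coeffL xs B₀ j‖ * ‖w t‖ := by
            rw [← Real.norm_eq_abs]; exact (coeffL xs B₀ j).le_opNorm (w t)
        _ ≤ _ := mul_le_mul_of_nonneg_right
            (Finset.single_le_sum (fun B _ => norm_nonneg (coeffL xs B j))
              (Finset.mem_univ B₀)) (norm_nonneg _)
    · push_neg at hex
      rw [heta_zero t hex j, abs_zero]
      positivity
  have hwsq_int : IntegrableOn (fun t => ‖w t‖ ^ 2) (Set.Icc 0 T) := by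
    set Cg : ℝ := β * (1 + Mx) with hCg
    have hub' : ∀ᵐ t ∂(volume : Measure ℝ), t ∈ Set.Icc 0 T →
        ‖w t‖ ^ 2 ≤ 2 * ‖xb' t‖ ^ 2 + 2 * Cg ^ 2 := by
      filter_upwards [hw_eq, hubU] with t h1 h2 ht
      have hwt : w t = dfun t := (h1 ht).symm
      have hgb : ‖g (pmk (xb t) (ub t))‖ ≤ Cg := by
        calc ‖g (pmk (xb t) (ub t))‖ ≤ β * (1 + ‖xb t‖) := hgβ (xb t) (ub t) (h2 ht)
          _ ≤ Cg := by
            rw [hCg]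
            have hb : ‖xb t‖ ≤ Mx := by rw [← hxt_eq t ht]; exact hMx t ht
            nlinarith
      have hwle : ‖w t‖ ≤ ‖xb' t‖ + Cg := by
        rw [hwt, hdfundef]
        calc ‖-xb' t - g (pmk (xb t) (ub t))‖ ≤
            ‖-xb' t‖ + ‖g (pmk (xb t) (ub t))‖ := norm_sub_le _ _
          _ ≤ ‖xb' t‖ + Cg := by rw [norm_neg]; linarith
      nlinarith [norm_nonneg (w t), norm_nonneg (xb' t), sq_nonneg (‖xb' t‖ - Cg),
        sq_nonneg (‖xb' t‖ + Cg), hwle]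
    have hintbnd : IntegrableOn (fun t => 2 * ‖xb' t‖ ^ 2 + 2 * Cg ^ 2) (Set.Icc 0 T) := by
      refine (hx'sq.const_mul 2).add ?_
      refine (integrableOn_const_iff).mpr (Or.inr ?_)
      rw [Real.volume_Icc]
      exact ENNReal.ofReal_lt_top
    refine Integrable.mono' hintbnd ?_ ?_
    · exact ((hw_meas.norm.pow_const 2).aestronglyMeasurable)
    · refine (ae_restrict_iff' measurableSet_Icc).mpr ?_
      filter_upwards [hub'] with t h ht
      rw [Real.norm_eq_abs, abs_of_nonneg (by positivity)]
      exact h ht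
  have hη_sq : ∀ j, IntegrableOn (fun t => (η j t) ^ 2) (Set.Icc 0 T) := by
    intro j
    obtain ⟨Kb, hKb0, hKb⟩ := hη_bound j
    refine Integrable.mono' (hwsq_int.const_mul (Kb ^ 2)) ?_ ?_
    · exact (((hη_meas j).pow_const 2).aestronglyMeasurable)
    · refine ae_of_all _ fun t => ?_
      rw [Real.norm_eq_abs, abs_of_nonneg (sq_nonneg _)]
      calc (η j t) ^ 2 = |η j t| ^ 2 := (sq_abs _).symm
        _ ≤ (Kb * ‖w t‖) ^ 2 := by nlinarith [abs_nonneg (η j t), hKb t]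
        _ = Kb ^ 2 * ‖w t‖ ^ 2 := by ring
  have hη_inactive : ∀ j, ∀ t ∈ Set.Icc 0 T, ⟪xs j, xb t⟫ < c j → η j t = 0 := by
    intro j t ht hlt
    by_cases hex : ∃ B, chosen xs c B (xt t, w t)
    · obtain ⟨B₀, hB₀⟩ := hex
      rw [heta_eq t B₀ hB₀ j]
      refine coeffL_of_not_mem xs (fun hj => ?_) (w t)
      have hact := hB₀.1.2.1 j hj
      rw [hxt_eq t ht] at hact
      exact absurd hact (ne_of_lt hlt)
    · push_neg at hex
      exact heta_zero t hex j
  refine ⟨η, hη_meas, fun j t _ => hη_nonneg j t, hη_sq, hη_inactive, ?_⟩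
  filter_upwards [hincl, hw_eq] with t h1 h2
  intro ht
  obtain ⟨v, hvN, heq⟩ := h1 ht
  have hvw : v = w t := by
    rw [← h2 ht, hdfundef]
    simp only
    rw [heq]; abel
  have hxC : ∀ j, ⟪xs j, xb t⟫ ≤ c j := by
    have hmem := hvN.1; rw [hC] at hmem; exact hmem
  have hvnormal : ∀ y : Euc n, (∀ j, ⟪xs j, y⟫ ≤ c j) → ⟪v, y - xb t⟫ ≤ 0 := by
    intro y hy
    exact hvN.2 y (by rw [hC]; exact hy)
  obtain ⟨α, hα0, hαz, hαsum⟩ := farkas_s15 xs c (xb t) v hxC hvnormal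
  set I : Finset (Fin s) := Finset.univ.filter (fun j => ⟪xs j, xb t⟫ = c j) with hIdef
  have hαsupp : ∀ j ∉ I, α j = 0 := by
    intro j hj
    refine hαz j ?_
    rcases lt_or_eq_of_le (hxC j) with h | h
    · exact h
    · exact absurd (show j ∈ I from Finset.mem_filter.mpr ⟨Finset.mem_univ j, h⟩) hj
  obtain ⟨B, hBsub, hBli, γ, hγ0, hγsupp, hγsum⟩ := cara xs I α hα0 hαsupp
  have hwt_sum : w t = ∑ j, γ j • xs j := by rw [hγsum, hαsum, hvw]
  have hgood : good xs c B (xt t, w t) := by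
    refine ⟨hBli, ?_, ?_, ?_⟩
    · intro j hj
      have hjI := (Finset.mem_filter.mp (hBsub hj)).2
      rw [hxt_eq t ht]
      exact hjI
    · intro j
      show 0 ≤ coeffL xs B j (w t)
      rw [hwt_sum, coeffL_eq xs hBli γ hγsupp j]
      exact hγ0 j
    · show ∑ j, coeffL xs B j (w t) • xs j = w t
      conv_lhs => rw [hwt_sum]
      rw [Finset.sum_congr rfl (fun j _ => by rw [coeffL_eq xs hBli γ hγsupp j])]
      exact hwt_sum.symm
  obtain ⟨B₀, hB₀⟩ := chosen_exists xs c hgood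
  have hsum : ∑ j, η j t • xs j = w t := by
    rw [Finset.sum_congr rfl (fun j _ => by rw [heta_eq t B₀ hB₀ j])]
    exact hB₀.1.2.2.2
  rw [hsum, ← h2 ht, hdfundef]
  simp only
  abel
end
end
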